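/- Let L be an effect algebra and μ : L → ℂ a bounded additive measure. Then for every a ∈ L: sup{|μ(b)| : b ∈ L, b ≤ a} ≤ |μ|(a) ≤ 4·sup{|μ(b)| : b ∈ L, b ≤ a}. Consequently, μ is bounded if and only if μ has bounded variation (|μ|(1) < ∞). Moreover, μ is exhaustive if and only if |μ| is exhaustive. -/

import Mathlib

open Filter Topology
open scoped ENNReal NNReal

/-- An effect algebra: a partial commutative monoid with orthosupplementation
and the zero-one law. `D a b` means `a ⊕ b` is defined; `add` is the (junk-valued
outside `D`) total extension of `⊕`. -/
structure EffectAlgebra (L : Type*) where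
  D : L → L → Prop
  add : L → L → L
  zero : L
  one : L
  comm_def : ∀ {a b}, D a b → D b a
  comm : ∀ {a b}, D a b → add a b = add b a
  assoc_def₁ : ∀ {a b c}, D b c → D a (add b c) → D a b
  assoc_def₂ : ∀ {a b c}, D b c → D a (add b c) → D (add a b) c
  assoc : ∀ {a b c}, D b c → D a (add b c) → add (add a b) c = add a (add b c)
  orth : ∀ a, ∃! a', D a a' ∧ add a a' = one
  zero_one : ∀ {a}, D one a → a = zero

namespace EffectAlgebra

variable {L : Type*}

/-- The canonical order: `a ≤ b` iff `a ⊕ r = b` for some `r`. -/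
def le (E : EffectAlgebra L) (a b : L) : Prop := ∃ r, E.D a r ∧ E.add a r = b

/-- The orthosupplement `1 ⊖ a`. -/
noncomputable def compl (E : EffectAlgebra L) (a : L) : L := (E.orth a).choose

/-- Partial sums `a 0 ⊕ ⋯ ⊕ a n`. -/
def psum (E : EffectAlgebra L) (a : ℕ → L) : ℕ → L
  | 0 => a 0
  | n + 1 => E.add (E.psum a n) (a (n + 1))

/-- A sequence is orthogonal when all its finite orthosums are defined. -/
def Orthogonal (E : EffectAlgebra L) (a : ℕ → L) : Prop :=
  ∀ n, E.D (E.psum a n) (a (n + 1))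

/-- `s` is the supremum of the set `S` in the canonical order. -/
def IsSup (E : EffectAlgebra L) (S : Set L) (s : L) : Prop :=
  (∀ x ∈ S, E.le x s) ∧ ∀ u, (∀ x ∈ S, E.le x u) → E.le s u

/-- `s = ⊕ₙ a n`: the sequence is orthogonal and `s` is the sup of the finite orthosums. -/
def IsOrthoSum (E : EffectAlgebra L) (a : ℕ → L) (s : L) : Prop :=
  E.Orthogonal a ∧ E.IsSup (Set.range (E.psum a)) s

/-- Additive (finitely additive) measure. -/
def IsMeasure {G : Type*} [AddCommMonoid G] (E : EffectAlgebra L) (μ : L → G) : Prop :=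
  ∀ a b, E.D a b → μ (E.add a b) = μ a + μ b

/-- σ-additivity: `μ (⊕ₙ a n) = Σₙ μ (a n)` whenever the orthosum exists. -/
def SigmaAdditive {G : Type*} [AddCommMonoid G] [TopologicalSpace G]
    (E : EffectAlgebra L) (μ : L → G) : Prop :=
  ∀ a s, E.IsOrthoSum a s →
    Tendsto (fun n => ∑ k ∈ Finset.range n, μ (a k)) atTop (𝓝 (μ s))

/-- Exhaustivity: `μ (a n) → 0` along every orthogonal sequence. -/
def Exhaustive {G : Type*} [AddCommMonoid G] [TopologicalSpace G]
    (E : EffectAlgebra L) (μ : L → G) : Prop :=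
  ∀ a, E.Orthogonal a → Tendsto (fun n => μ (a n)) atTop (𝓝 0)

/-- A generator: every element is the sup of an increasing sequence from `B`. -/
def IsGenerator (E : EffectAlgebra L) (B : Set L) : Prop :=
  ∀ a : L, ∃ b : ℕ → L, (∀ n, b n ∈ B) ∧ (∀ n, E.le (b n) (b (n + 1)))
    ∧ E.IsSup (Set.range b) a

/-- Riesz decomposition property. -/
def RDP (E : EffectAlgebra L) : Prop :=
  ∀ a b c, E.D a b → E.le c (E.add a b) →
    ∃ c₁ c₂, E.D c₁ c₂ ∧ E.add c₁ c₂ = c ∧ E.le c₁ a ∧ E.le c₂ b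

/-- Strong Riesz decomposition property. -/
def sRDP (E : EffectAlgebra L) : Prop :=
  ∀ (a : ℕ → L) (s c : L), E.IsOrthoSum a s → E.le c s →
    ∃ c' : ℕ → L, E.IsOrthoSum c' c ∧ ∀ n, E.le (c' n) (a n)

/-- A natural basis: an orthogonal sequence of minimal nonzero elements with orthosum `1`. -/
def IsNaturalBasis (E : EffectAlgebra L) (b : ℕ → L) : Prop :=
  E.IsOrthoSum b E.one ∧
  ∀ n, b n ≠ E.zero ∧ ∀ c, c ≠ E.zero → E.le c (b n) → c = b n

/-- The set of finite orthosums of elements of the sequence `b`. -/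
def finOrthosums (E : EffectAlgebra L) (b : ℕ → L) : Set L :=
  { x | ∃ c : ℕ → L, (∀ n, c n = b n ∨ c n = E.zero) ∧ E.Orthogonal c ∧
        ∃ N, x = E.psum c N }

/-- A sequence of measures is pointwise convergent. -/
def PtwiseConv (μ : ℕ → L → ℝ) : Prop :=
  ∀ a : L, ∃ x : ℝ, Tendsto (fun i => μ i a) atTop (𝓝 x)

/-- Uniform exhaustivity of a sequence of measures. -/
def UnifExhaustive (E : EffectAlgebra L) (μ : ℕ → L → ℝ) : Prop :=
  ∀ a, E.Orthogonal a →
    TendstoUniformly (fun n (i : ℕ) => μ i (a n)) (fun _ => (0 : ℝ)) atTop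

/-- Uniform strong additivity of a sequence of measures. -/
def UnifStronglyAdditive (E : EffectAlgebra L) (μ : ℕ → L → ℝ) : Prop :=
  ∀ a, E.Orthogonal a → ∃ f : ℕ → ℝ,
    TendstoUniformly (fun n (i : ℕ) => ∑ k ∈ Finset.range n, μ i (a k)) f atTop

/-- The Nikodym property. -/
def Nikodym (E : EffectAlgebra L) : Prop :=
  ∀ μ : ℕ → L → ℝ, (∀ i, E.IsMeasure (μ i)) → (∀ i, ∃ M, ∀ a, |μ i a| ≤ M) →
    (∀ a : L, ∃ M, ∀ i, |μ i a| ≤ M) → ∃ M, ∀ i, ∀ a : L, |μ i a| ≤ M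

/-- The Grothendieck property. -/
def Grothendieck (E : EffectAlgebra L) : Prop :=
  ∀ μ : ℕ → L → ℝ, (∀ i, E.IsMeasure (μ i)) → (∀ i, ∃ M, ∀ a, |μ i a| ≤ M) →
    PtwiseConv μ → (∃ M, ∀ i, ∀ a : L, |μ i a| ≤ M) → E.UnifStronglyAdditive μ

/-- The Vitali-Hahn-Saks property. -/
def VHS (E : EffectAlgebra L) : Prop :=
  ∀ μ : ℕ → L → ℝ, (∀ i, E.IsMeasure (μ i)) → (∀ i, ∃ M, ∀ a, |μ i a| ≤ M) →
    PtwiseConv μ → E.UnifExhaustive μ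

/-- The σ-Nikodym property. -/
def SigmaNikodym (E : EffectAlgebra L) : Prop :=
  ∀ μ : ℕ → L → ℝ, (∀ i, E.IsMeasure (μ i)) → (∀ i, E.SigmaAdditive (μ i)) →
    (∀ i, ∃ M, ∀ a, |μ i a| ≤ M) →
    (∀ a : L, ∃ M, ∀ i, |μ i a| ≤ M) → ∃ M, ∀ i, ∀ a : L, |μ i a| ≤ M

/-- The σ-Vitali-Hahn-Saks property. -/
def SigmaVHS (E : EffectAlgebra L) : Prop :=
  ∀ μ : ℕ → L → ℝ, (∀ i, E.IsMeasure (μ i)) → (∀ i, E.SigmaAdditive (μ i)) →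
    (∀ i, ∃ M, ∀ a, |μ i a| ≤ M) → PtwiseConv μ → E.UnifExhaustive μ

/-- A bounding subset. -/
def Bounding (E : EffectAlgebra L) (B : Set L) : Prop :=
  ∀ (G : Type) [NormedAddCommGroup G], ∀ μ : ℕ → L → G,
    (∀ i, E.IsMeasure (μ i)) → (∀ i, E.SigmaAdditive (μ i)) →
    (∀ a : L, ∃ M, ∀ i, ‖μ i a‖ ≤ M) →
    ((∃ M, ∀ i, ∀ b ∈ B, ‖μ i b‖ ≤ M) ↔ (∃ M, ∀ i, ∀ a : L, ‖μ i a‖ ≤ M))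

/-- A natural subset: a generator closed under orthosums of orthogonal pairs all of whose
orthogonal-complement slices are bounding. -/
def NaturalSubset (E : EffectAlgebra L) (B : Set L) : Prop :=
  E.IsGenerator B ∧ (∀ b ∈ B, ∀ c ∈ B, E.D b c → E.add b c ∈ B) ∧
    ∀ b ∈ B, E.Bounding {c ∈ B | E.D c b}

/-- A natural effect algebra: one admitting a natural subset. -/
def Natural (E : EffectAlgebra L) : Prop := ∃ B, E.NaturalSubset B

/-- The orthogonally sequential property. -/
def OSP (E : EffectAlgebra L) : Prop :=
  ∀ b : ℕ → L, ∃ c : ℕ → L, E.Orthogonal c ∧ (∀ k, E.le (c k) (b k)) ∧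
    ∀ (a : L) (k₀ : ℕ), E.le a (b k₀) → (∀ i, i ≠ k₀ → E.le (b i) (E.compl a)) →
      E.le a (c k₀)

/-- The subsequential interpolation property. -/
def SIP (E : EffectAlgebra L) : Prop :=
  ∀ a : ℕ → L, E.Orthogonal a → ∀ M : Set ℕ, M.Infinite →
    ∃ (x : L) (N : Set ℕ), N ⊆ M ∧ N.Infinite ∧ (∀ n ∈ N, E.le (a n) x) ∧
      ∀ n ∉ N, E.le (a n) (E.compl x)

/-- Iterated orthosum starting from `x`: all steps defined. -/
def OrthoFrom (E : EffectAlgebra L) : L → List L → Prop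
  | _, [] => True
  | x, y :: ys => E.D x y ∧ E.OrthoFrom (E.add x y) ys

/-- The orthosum `x ⊕ y₁ ⊕ ⋯ ⊕ yₙ` of a nonempty list. -/
def psumList (E : EffectAlgebra L) : L → List L → L
  | x, [] => x
  | x, y :: ys => E.psumList (E.add x y) ys

/-- The variation of a measure: the sup over finite decompositions
`e = e₁ ⊕ ⋯ ⊕ eₙ` of `Σ ‖μ eᵢ‖`, valued in `[0,∞]`. -/
noncomputable def variation {G : Type*} [NormedAddCommGroup G]
    (E : EffectAlgebra L) (μ : L → G) (e : L) : ℝ≥0∞ :=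
  sSup { v : ℝ≥0∞ | ∃ (x : L) (xs : List L), E.OrthoFrom x xs ∧ E.psumList x xs = e ∧
    v = ((x :: xs).map fun y => (‖μ y‖₊ : ℝ≥0∞)).sum }

end EffectAlgebra

lemma ofReal_norm_eq_coe_nnnorm {E : Type*} [SeminormedAddCommGroup E] (a : E) :
    ENNReal.ofReal ‖a‖ = (‖a‖₊ : ℝ≥0∞) :=
  (ofReal_norm a).trans (enorm_eq_nnnorm a)

namespace EffectAlgebra
variable {L : Type*} (E : EffectAlgebra L)

lemma assoc' {a b c : L} (hab : E.D a b) (h : E.D (E.add a b) c) :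
    E.D b c ∧ E.D a (E.add b c) ∧ E.add (E.add a b) c = E.add a (E.add b c) := by
  have hc : E.D c (E.add a b) := E.comm_def h
  have hca : E.D c a := E.assoc_def₁ hab hc
  have hcab : E.D (E.add c a) b := E.assoc_def₂ hab hc
  have e1 : E.add (E.add c a) b = E.add c (E.add a b) := E.assoc hab hc
  have hb : E.D b (E.add c a) := E.comm_def hcab
  have hbc : E.D b c := E.assoc_def₁ hca hb
  have hbca : E.D (E.add b c) a := E.assoc_def₂ hca hb
  have e2 : E.add (E.add b c) a = E.add b (E.add c a) := E.assoc hca hb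
  refine ⟨hbc, E.comm_def hbca, ?_⟩
  rw [E.comm h, ← e1, E.comm (E.comm_def hbca), e2, E.comm hca]; rw [← E.comm hca]; exact E.comm hcab

lemma one_facts : E.D E.one E.zero ∧ E.add E.one E.zero = E.one := by
  obtain ⟨a', ⟨h1, h2⟩, _⟩ := E.orth E.one
  have hz := E.zero_one h1
  rw [hz] at h1 h2
  exact ⟨h1, h2⟩

lemma add_zero' (z : L) : E.D z E.zero ∧ E.add z E.zero = z := by
  obtain ⟨z', ⟨h1, h2⟩, _⟩ := E.orth z
  have h1' : E.D z' z := E.comm_def h1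
  have h2' : E.add z' z = E.one := by rw [E.comm h1'] ; exact h2
  have hone := E.one_facts
  have hD1 : E.D (E.add z' z) E.zero := by rw [h2']; exact hone.1
  obtain ⟨hz0, hzD, heq⟩ := E.assoc' h1' hD1
  have : E.add z' (E.add z E.zero) = E.one := by
    rw [← heq, h2', hone.2]
  -- uniqueness from orth z'
  obtain ⟨w, hw, huniq⟩ := E.orth z'
  have e1 := huniq _ ⟨hzD, this⟩
  have e2 := huniq _ ⟨h1', h2'⟩
  exact ⟨hz0, e1.trans e2.symm⟩

lemma D_zero (z : L) : E.D z E.zero := (E.add_zero' z).1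
lemma add_zero (z : L) : E.add z E.zero = z := (E.add_zero' z).2
lemma D_zero' (z : L) : E.D E.zero z := E.comm_def (E.D_zero z)
lemma zero_add (z : L) : E.add E.zero z = z := by
  rw [E.comm (E.D_zero' z), E.add_zero]

lemma le_refl (z : L) : E.le z z := ⟨E.zero, E.D_zero z, E.add_zero z⟩
lemma zero_le (z : L) : E.le E.zero z := ⟨z, E.D_zero' z, E.zero_add z⟩

lemma le_trans {a b c : L} (h1 : E.le a b) (h2 : E.le b c) : E.le a c := by
  obtain ⟨r, hr, hrb⟩ := h1
  obtain ⟨s, hs, hsc⟩ := h2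
  rw [← hrb] at hs hsc
  obtain ⟨hrs, haD, heq⟩ := E.assoc' hr hs
  exact ⟨E.add r s, haD, by rw [← heq, hsc]⟩

/-- monotonicity through a list of orthogonal additions -/
lemma orthoFrom_mono {u w : L} (h : E.le u w) :
    ∀ ys : List L, E.OrthoFrom w ys →
      E.OrthoFrom u ys ∧ E.le (E.psumList u ys) (E.psumList w ys) := by
  intro ys
  induction ys generalizing u w with
  | nil => intro _; exact ⟨trivial, h⟩
  | cons y ys ih =>
    rintro ⟨hwy, hrest⟩
    obtain ⟨r, hur, hurw⟩ := h
    rw [← hurw] at hwy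
    obtain ⟨hry, huD, heq⟩ := E.assoc' hur hwy
    -- u ⊕ (r⊕y) defined; want D u y and (u⊕y) ≤ (u⊕r)⊕y
    have hyr : E.D y r := E.comm_def hry
    have huyr : E.D u (E.add y r) := by rwa [← E.comm hyr] at huD
    have huy : E.D u y := E.assoc_def₁ hyr huyr
    have huyD : E.D (E.add u y) r := E.assoc_def₂ hyr huyr
    have : E.add (E.add u y) r = E.add w y := by
      rw [E.assoc hyr huyr, E.comm hyr, ← heq, hurw]
    have hle : E.le (E.add u y) (E.add w y) := ⟨r, huyD, this⟩
    obtain ⟨ho, hl⟩ := ih hle hrest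
    exact ⟨⟨huy, ho⟩, hl⟩

/-- pair lemma -/
lemma D_mono {a b x y : L} (ha : E.le a x) (hb : E.le b y) (h : E.D x y) :
    E.D a b ∧ E.le (E.add a b) (E.add x y) := by
  have h1 := E.orthoFrom_mono ha [y] ⟨h, trivial⟩
  obtain ⟨⟨hay, -⟩, hle1⟩ := h1
  have h2 := E.orthoFrom_mono hb [a] ⟨E.comm_def hay, trivial⟩
  obtain ⟨⟨hba, -⟩, hle2⟩ := h2
  have hab := E.comm_def hba
  refine ⟨hab, ?_⟩
  have : E.add a b = E.add b a := E.comm hab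
  rw [this]
  exact E.le_trans (by simpa [psumList, E.comm hay] using hle2) hle1


lemma measure_zero {G : Type*} [AddCommGroup G] {μ : L → G} (hμ : E.IsMeasure μ) :
    μ E.zero = 0 := by
  have h := hμ E.zero E.zero (E.D_zero E.zero)
  rw [E.add_zero] at h
  exact left_eq_add.mp h

lemma measure_psumList {G : Type*} [AddCommGroup G] {μ : L → G} (hμ : E.IsMeasure μ) :
    ∀ (xs : List L) (x : L), E.OrthoFrom x xs →
      μ (E.psumList x xs) = μ x + (xs.map μ).sum := by
  intro xs
  induction xs with
  | nil => intro x _; simp [psumList]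
  | cons y ys ih =>
    rintro x ⟨hxy, hrest⟩
    simp only [psumList, List.map_cons, List.sum_cons]
    rw [ih _ hrest, hμ _ _ hxy, add_assoc]

lemma mask_le {m : L → L} (hm : ∀ z, m z = z ∨ m z = E.zero) (z : L) :
    E.le (m z) z := by
  rcases hm z with h | h <;> rw [h]
  · exact E.le_refl z
  · exact E.zero_le z

lemma orthoFrom_mask {m : L → L} (hm : ∀ z, m z = z ∨ m z = E.zero) :
    ∀ (xs : List L) (x x' : L), E.le x' x → E.OrthoFrom x xs →
      E.OrthoFrom x' (xs.map m) ∧ E.le (E.psumList x' (xs.map m)) (E.psumList x xs) := by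
  intro xs
  induction xs with
  | nil => intro x x' h _; exact ⟨trivial, h⟩
  | cons y ys ih =>
    rintro x x' h ⟨hxy, hrest⟩
    obtain ⟨hD, hle⟩ := E.D_mono h (E.mask_le hm y) hxy
    obtain ⟨ho, hl⟩ := ih (E.add x y) (E.add x' (m y)) hle hrest
    exact ⟨⟨hD, ho⟩, hl⟩

lemma psum_le_succ {a : ℕ → L} (h : E.Orthogonal a) (n : ℕ) :
    E.le (E.psum a n) (E.psum a (n + 1)) := ⟨a (n + 1), h n, rfl⟩

lemma psum_le_psum {a : ℕ → L} (h : E.Orthogonal a) {m n : ℕ} (hmn : m ≤ n) :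
    E.le (E.psum a m) (E.psum a n) := by
  induction n with
  | zero => rw [Nat.le_zero.mp hmn]; exact E.le_refl _
  | succ n ih =>
    rcases Nat.eq_or_lt_of_le hmn with h' | h'
    · rw [h']; exact E.le_refl _
    · exact E.le_trans (ih (Nat.lt_succ_iff.mp h')) (E.psum_le_succ h n)

lemma le_psum {a : ℕ → L} (h : E.Orthogonal a) (n : ℕ) : E.le (a n) (E.psum a n) := by
  cases n with
  | zero => exact E.le_refl _
  | succ n => exact ⟨E.psum a n, E.comm_def (h n), (E.comm (E.comm_def (h n))).trans rfl⟩

lemma subseq_step {a b : ℕ → L} {n : ℕ → ℕ} (ha : E.Orthogonal a)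
    (hmono : StrictMono n) (hb : ∀ k, E.le (b k) (a (n k))) (k : ℕ)
    (hQ : E.le (E.psum b k) (E.psum a (n k))) :
    E.D (E.psum b k) (b (k + 1)) ∧ E.le (E.psum b (k + 1)) (E.psum a (n (k + 1))) := by
  set m := n (k + 1) - 1 with hm
  have hpos : 1 ≤ n (k + 1) := Nat.one_le_iff_ne_zero.mpr (by
    intro h0
    exact Nat.not_lt_zero (n k) (h0 ▸ hmono (Nat.lt_succ_self k)))
  have hm1 : m + 1 = n (k + 1) := Nat.succ_pred_eq_of_pos hpos
  have hmk : n k ≤ m := Nat.le_sub_one_of_lt (hmono (Nat.lt_succ_self k))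
  have h1 : E.le (E.psum b k) (E.psum a m) := E.le_trans hQ (E.psum_le_psum ha hmk)
  have h2 : E.le (b (k + 1)) (a (m + 1)) := by rw [hm1]; exact hb (k + 1)
  obtain ⟨hD, hle⟩ := E.D_mono h1 h2 (ha m)
  refine ⟨hD, ?_⟩
  have : E.psum a (m + 1) = E.psum a (n (k + 1)) := by rw [hm1]
  exact this ▸ hle

lemma subseq_ortho {a b : ℕ → L} {n : ℕ → ℕ} (ha : E.Orthogonal a)
    (hmono : StrictMono n) (hb : ∀ k, E.le (b k) (a (n k))) :
    E.Orthogonal b := by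
  have key : ∀ k, E.le (E.psum b k) (E.psum a (n k)) := by
    intro k
    induction k with
    | zero => exact E.le_trans (hb 0) (E.le_psum ha (n 0))
    | succ k ih => exact (E.subseq_step ha hmono hb k ih).2
  exact fun k => (E.subseq_step ha hmono hb k (key k)).1


lemma nnnorm_le_variation {G : Type*} [NormedAddCommGroup G] (μ : L → G) {a b : L}
    (h : E.le b a) : (‖μ b‖₊ : ℝ≥0∞) ≤ E.variation μ a := by
  obtain ⟨r, hD, hadd⟩ := h
  have hmem : (((b :: [r]).map fun y => (‖μ y‖₊ : ℝ≥0∞)).sum) ∈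
      { v : ℝ≥0∞ | ∃ (x : L) (xs : List L), E.OrthoFrom x xs ∧ E.psumList x xs = a ∧
        v = ((x :: xs).map fun y => (‖μ y‖₊ : ℝ≥0∞)).sum } :=
    ⟨b, [r], ⟨hD, trivial⟩, hadd, rfl⟩
  refine _root_.le_trans ?_ (le_sSup hmem)
  simp

lemma list_sum_sub {f g : L → ℝ} (l : List L) :
    (l.map fun y => f y - g y).sum = (l.map f).sum - (l.map g).sum := by
  induction l with
  | nil => simp
  | cons y l ih => simp [ih]; ring

lemma list_sum_add {f g : L → ℝ} (l : List L) :
    (l.map fun y => f y + g y).sum = (l.map f).sum + (l.map g).sum := by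
  induction l with
  | nil => simp
  | cons y l ih => simp [ih]; ring

lemma list_sum_le {f g : L → ℝ} (l : List L) (h : ∀ y ∈ l, f y ≤ g y) :
    (l.map f).sum ≤ (l.map g).sum := by
  induction l with
  | nil => simp
  | cons y l ih =>
    simp only [List.map_cons, List.sum_cons]
    exact add_le_add (h y List.mem_cons_self) (ih fun z hz => h z (List.mem_cons_of_mem y hz))

lemma list_coe_sum (μ : L → ℂ) (l : List L) :
    ((l.map fun y => (‖μ y‖₊ : ℝ≥0∞)).sum) = ENNReal.ofReal ((l.map fun y => ‖μ y‖).sum) := by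
  induction l with
  | nil => simp
  | cons y l ih =>
    simp only [List.map_cons, List.sum_cons, ih]
    rw [ENNReal.ofReal_add (norm_nonneg _) (List.sum_nonneg (by
      intro x hx; obtain ⟨z, _, rfl⟩ := List.mem_map.mp hx; exact norm_nonneg _)),
      ofReal_norm_eq_coe_nnnorm]

open Classical in
lemma sum_abs_comp_le (μ : L → ℂ) (hμ : E.IsMeasure μ) (φ : ℂ →+ ℝ)
    (hφ : ∀ z, φ z ≤ ‖z‖)
    {x : L} {xs : List L} (hof : E.OrthoFrom x xs) :
    ∃ b₁ b₂ : L, E.le b₁ (E.psumList x xs) ∧ E.le b₂ (E.psumList x xs) ∧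
      (((x :: xs).map fun y => |φ (μ y)|).sum) ≤ ‖μ b₁‖ + ‖μ b₂‖ := by
  set m₁ : L → L := fun y => if 0 ≤ φ (μ y) then y else E.zero with hm₁def
  set m₂ : L → L := fun y => if 0 ≤ φ (μ y) then E.zero else y with hm₂def
  have hm₁ : ∀ z, m₁ z = z ∨ m₁ z = E.zero := by
    intro z; by_cases h : 0 ≤ φ (μ z) <;> simp [hm₁def, h]
  have hm₂ : ∀ z, m₂ z = z ∨ m₂ z = E.zero := by
    intro z; by_cases h : 0 ≤ φ (μ z) <;> simp [hm₂def, h]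
  obtain ⟨ho₁, hl₁⟩ := E.orthoFrom_mask hm₁ xs x (m₁ x) (E.mask_le hm₁ x) hof
  obtain ⟨ho₂, hl₂⟩ := E.orthoFrom_mask hm₂ xs x (m₂ x) (E.mask_le hm₂ x) hof
  refine ⟨_, _, hl₁, hl₂, ?_⟩
  have hsum : ∀ (m : L → L), E.OrthoFrom (m x) (xs.map m) →
      μ (E.psumList (m x) (xs.map m)) = ((x :: xs).map fun y => μ (m y)).sum := by
    intro m ho
    rw [E.measure_psumList hμ _ _ ho, List.map_map, List.map_cons, List.sum_cons]
    rfl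
  have key₁ : φ (μ (E.psumList (m₁ x) (xs.map m₁)))
      = ((x :: xs).map fun y => if 0 ≤ φ (μ y) then φ (μ y) else 0).sum := by
    rw [hsum m₁ ho₁, map_list_sum, List.map_map]
    congr 1
    apply List.map_congr_left
    intro y _
    by_cases h : 0 ≤ φ (μ y) <;> simp [hm₁def, h, E.measure_zero hμ]
  have key₂ : φ (μ (E.psumList (m₂ x) (xs.map m₂)))
      = ((x :: xs).map fun y => if 0 ≤ φ (μ y) then 0 else φ (μ y)).sum := by
    rw [hsum m₂ ho₂, map_list_sum, List.map_map]
    congr 1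
    apply List.map_congr_left
    intro y _
    by_cases h : 0 ≤ φ (μ y) <;> simp [hm₂def, h, E.measure_zero hμ]
  have habs : (((x :: xs).map fun y => |φ (μ y)|).sum)
      = φ (μ (E.psumList (m₁ x) (xs.map m₁))) - φ (μ (E.psumList (m₂ x) (xs.map m₂))) := by
    rw [key₁, key₂, ← list_sum_sub]
    congr 1
    apply List.map_congr_left
    intro y _
    by_cases h : 0 ≤ φ (μ y)
    · simp [h, abs_of_nonneg h]
    · simp [h, abs_of_neg (lt_of_not_ge h)]
  rw [habs]
  have h1 := hφ (μ (E.psumList (m₁ x) (xs.map m₁)))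
  have h2 : -φ (μ (E.psumList (m₂ x) (xs.map m₂))) ≤ ‖μ (E.psumList (m₂ x) (xs.map m₂))‖ := by
    rw [← map_neg]
    calc φ (-μ (E.psumList (m₂ x) (xs.map m₂))) ≤ ‖-μ (E.psumList (m₂ x) (xs.map m₂))‖ := hφ _
    _ = _ := norm_neg _
  linarith

lemma variation_le_four (μ : L → ℂ) (hμ : E.IsMeasure μ) (a : L) :
    E.variation μ a ≤ 4 * ⨆ b ∈ {x : L | E.le x a}, (‖μ b‖₊ : ℝ≥0∞) := by
  set S := ⨆ b ∈ {x : L | E.le x a}, (‖μ b‖₊ : ℝ≥0∞) with hSdef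
  have hS : ∀ b, E.le b a → (‖μ b‖₊ : ℝ≥0∞) ≤ S := by
    intro b hb
    exact le_biSup (f := fun b => (‖μ b‖₊ : ℝ≥0∞)) hb
  refine sSup_le ?_
  rintro v ⟨x, xs, hof, hps, rfl⟩
  obtain ⟨b₁, b₂, h₁, h₂, hre⟩ := E.sum_abs_comp_le μ hμ Complex.reAddGroupHom
    (fun z => (abs_le.mp (Complex.abs_re_le_norm z)).2) hof
  obtain ⟨b₃, b₄, h₃, h₄, him⟩ := E.sum_abs_comp_le μ hμ Complex.imAddGroupHom
    (fun z => (abs_le.mp (Complex.abs_im_le_norm z)).2) hof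
  rw [hps] at h₁ h₂ h₃ h₄
  have hnorm : (((x :: xs).map fun y => ‖μ y‖).sum)
      ≤ (‖μ b₁‖ + ‖μ b₂‖) + (‖μ b₃‖ + ‖μ b₄‖) := by
    have step : (((x :: xs).map fun y => ‖μ y‖).sum)
        ≤ (((x :: xs).map fun y => |(μ y).re| + |(μ y).im|).sum) := by
      apply list_sum_le
      intro y _
      simpa using Complex.norm_le_abs_re_add_abs_im (μ y)
    rw [list_sum_add] at step
    have hco : ∀ z : ℂ, Complex.reAddGroupHom z = z.re := fun _ => rfl
    have hco' : ∀ z : ℂ, Complex.imAddGroupHom z = z.im := fun _ => rfl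
    simp only [hco] at hre
    simp only [hco'] at him
    exact _root_.le_trans step (add_le_add hre him)
  calc (((x :: xs).map fun y => (‖μ y‖₊ : ℝ≥0∞)).sum)
      = ENNReal.ofReal (((x :: xs).map fun y => ‖μ y‖).sum) := list_coe_sum μ _
    _ ≤ ENNReal.ofReal ((‖μ b₁‖ + ‖μ b₂‖) + (‖μ b₃‖ + ‖μ b₄‖)) := ENNReal.ofReal_le_ofReal hnorm
    _ ≤ (ENNReal.ofReal ‖μ b₁‖ + ENNReal.ofReal ‖μ b₂‖)
        + (ENNReal.ofReal ‖μ b₃‖ + ENNReal.ofReal ‖μ b₄‖) := by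
        refine _root_.le_trans (ENNReal.ofReal_add_le) (add_le_add ENNReal.ofReal_add_le ENNReal.ofReal_add_le)
    _ = ((‖μ b₁‖₊ : ℝ≥0∞) + (‖μ b₂‖₊ : ℝ≥0∞)) + ((‖μ b₃‖₊ : ℝ≥0∞) + (‖μ b₄‖₊ : ℝ≥0∞)) := by
        rw [ofReal_norm_eq_coe_nnnorm, ofReal_norm_eq_coe_nnnorm, ofReal_norm_eq_coe_nnnorm,
          ofReal_norm_eq_coe_nnnorm]
    _ ≤ (S + S) + (S + S) := by
        exact add_le_add (add_le_add (hS _ h₁) (hS _ h₂)) (add_le_add (hS _ h₃) (hS _ h₄))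
    _ = 4 * S := by ring

end EffectAlgebra

open EffectAlgebra in
/-- For a bounded complex measure on an effect algebra: two-sided estimates of the
variation by suprema over smaller elements; boundedness is equivalent to bounded
variation; and exhaustivity is equivalent to exhaustivity of the variation. -/
theorem stmt19 {L : Type*} (E : EffectAlgebra L) (μ : L → ℂ)
    (hμ : E.IsMeasure μ) (hb : ∃ M : ℝ, ∀ a : L, ‖μ a‖ ≤ M) :
    (∀ a : L,
        (⨆ b ∈ {x : L | E.le x a}, (‖μ b‖₊ : ℝ≥0∞)) ≤ E.variation μ a ∧
        E.variation μ a ≤ 4 * ⨆ b ∈ {x : L | E.le x a}, (‖μ b‖₊ : ℝ≥0∞)) ∧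
    (∀ ν : L → ℂ, E.IsMeasure ν →
        ((∃ M : ℝ, ∀ a : L, ‖ν a‖ ≤ M) ↔ E.variation ν E.one < ⊤)) ∧
    (E.Exhaustive μ ↔
        ∀ a : ℕ → L, E.Orthogonal a →
          Filter.Tendsto (fun n => E.variation μ (a n)) Filter.atTop (nhds 0)) := by

  refine ⟨?_, ?_, ?_⟩
  · intro a
    exact ⟨iSup₂_le fun b hb' => E.nnnorm_le_variation μ hb', E.variation_le_four μ hμ a⟩
  · intro ν hν
    constructor
    · rintro ⟨M, hM⟩
      refine lt_of_le_of_lt (E.variation_le_four ν hν E.one) ?_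
      have hsup : (⨆ b ∈ {x : L | E.le x E.one}, (‖ν b‖₊ : ℝ≥0∞)) ≤ ENNReal.ofReal M := by
        refine iSup₂_le fun b _ => ?_
        rw [← ofReal_norm_eq_coe_nnnorm]
        exact ENNReal.ofReal_le_ofReal (hM b)
      refine lt_of_le_of_lt (mul_le_mul_right hsup 4) ?_
      exact ENNReal.mul_lt_top (by simp) ENNReal.ofReal_lt_top
    · intro h
      refine ⟨(E.variation ν E.one).toReal, fun a => ?_⟩
      obtain ⟨a', ⟨hD, hadd⟩, -⟩ := E.orth a
      have hle : E.le a E.one := ⟨a', hD, hadd⟩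
      have h1 : (‖ν a‖₊ : ℝ≥0∞) ≤ E.variation ν E.one := E.nnnorm_le_variation ν hle
      have := ENNReal.toReal_mono h.ne h1
      simpa using this
  · constructor
    · intro hex a ha
      have hup : ∀ n, E.variation μ (a n) ≤
          4 * ⨆ b ∈ {x : L | E.le x (a n)}, (‖μ b‖₊ : ℝ≥0∞) :=
        fun n => E.variation_le_four μ hμ (a n)
      have hSz : Tendsto (fun n => ⨆ b ∈ {x : L | E.le x (a n)}, (‖μ b‖₊ : ℝ≥0∞))
          atTop (𝓝 0) := by
        rw [ENNReal.tendsto_nhds_zero]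
        by_contra hcon
        push_neg at hcon
        obtain ⟨ε, hε, hfreq⟩ := hcon
        have hfreq' : ∃ᶠ n in atTop, ∃ b, E.le b (a n) ∧ ε < (‖μ b‖₊ : ℝ≥0∞) := by
          refine (Filter.not_eventually.mp hfreq).mono fun n hn => ?_
          have : ε < ⨆ b ∈ {x : L | E.le x (a n)}, (‖μ b‖₊ : ℝ≥0∞) := not_not.mp hn
          obtain ⟨b, hbb⟩ := lt_iSup_iff.mp this
          obtain ⟨hb1, hb2⟩ := lt_iSup_iff.mp hbb
          exact ⟨b, hb1, hb2⟩
        obtain ⟨φ, hφ, hP⟩ := Filter.extraction_of_frequently_atTop hfreq'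
        choose b hble hbgt using hP
        have hbo : E.Orthogonal b := E.subseq_ortho ha hφ hble
        have htd := hex b hbo
        have hεtop : ε ≠ ⊤ := ne_top_of_lt (lt_of_lt_of_le (hbgt 0) le_top)
        have hεpos : 0 < ε.toReal := ENNReal.toReal_pos hε.ne' hεtop
        have hnorm : Tendsto (fun k => ‖μ (b k)‖) atTop (𝓝 0) :=
          tendsto_zero_iff_norm_tendsto_zero.mp htd
        have hev := (hnorm.eventually (gt_mem_nhds hεpos)).exists
        obtain ⟨k, hk⟩ := hev
        have : ε.toReal < ‖μ (b k)‖ := by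
          have h2 := hbgt k
          rw [← ofReal_norm_eq_coe_nnnorm] at h2
          have := ENNReal.toReal_strict_mono (by simp) h2
          simpa [ENNReal.toReal_ofReal (norm_nonneg _)] using this
        linarith
      have h4 : Tendsto (fun n => 4 * ⨆ b ∈ {x : L | E.le x (a n)}, (‖μ b‖₊ : ℝ≥0∞))
          atTop (𝓝 0) := by
        have := ENNReal.Tendsto.const_mul (a := 4) hSz (Or.inr (by simp))
        simpa using this
      exact tendsto_of_tendsto_of_tendsto_of_le_of_le tendsto_const_nhds h4
        (fun n => _root_.zero_le) hup
    · intro h a ha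
      have hvar := h a ha
      have hcoe : Tendsto (fun n => (‖μ (a n)‖₊ : ℝ≥0∞)) atTop (𝓝 0) :=
        tendsto_of_tendsto_of_tendsto_of_le_of_le tendsto_const_nhds hvar
          (fun n => _root_.zero_le) (fun n => E.nnnorm_le_variation μ (E.le_refl (a n)))
      have hnn : Tendsto (fun n => ‖μ (a n)‖₊) atTop (𝓝 0) := by
        rw [← ENNReal.coe_zero] at hcoe
        exact ENNReal.tendsto_coe.mp hcoe
      have hn : Tendsto (fun n => ‖μ (a n)‖) atTop (𝓝 0) := by
        have h2 := (NNReal.tendsto_coe (x := (0 : ℝ≥0))).mpr hnn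
        simpa using h2
      exact tendsto_zero_iff_norm_tendsto_zero.mpr hn
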